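/- Let A be an element of a complex Banach algebra, let l ≥ 2 be an integer, and let a, b be real numbers. Then (a+b)^l · φ_l((a+b)^2 A) = a^l · φ_0(b^2 A)·φ_l(a^2 A) + a^{l−1} b · φ_1(b^2 A)·φ_{l−1}(a^2 A) + Σ_{k=2}^{l} (a^{l−k} b^k/(l−k)!) · φ_k(b^2 A). -/
import Mathlib

set_option maxHeartbeats 1000000

open Finset

lemma sum_range_even_odd {M : Type*} [AddCommMonoid M] (f : ℕ → M) (n : ℕ) :
    ∑ m ∈ range (2*n), f m = ∑ i ∈ range n, f (2*i) + ∑ i ∈ range n, f (2*i+1) := by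
  induction n with
  | zero => simp
  | succ n ih =>
    have h : 2*(n+1) = (2*n+1)+1 := by ring
    rw [h, sum_range_succ, sum_range_succ, ih, sum_range_succ, sum_range_succ]
    abel

noncomputable def Tc (a b : ℂ) (N m : ℕ) : ℂ :=
  a^(N-m) * b^m / (((N-m).factorial :ℂ) * (m.factorial :ℂ))

lemma hfacC : ∀ m : ℕ, ((m.factorial :ℂ)) ≠ 0 := fun m => Nat.cast_ne_zero.2 m.factorial_ne_zero

lemma coeffId (a b : ℂ) (l n : ℕ) (hl : 2 ≤ l) :
    (a+b)^l * ((-1:ℂ)^n / ((2*n+l).factorial :ℂ) * ((a+b)^2)^n) =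
    a^l * (∑ ij ∈ antidiagonal n, ((-1:ℂ)^ij.1 / ((2*ij.1+0).factorial :ℂ) * (b^2)^ij.1) *
        ((-1:ℂ)^ij.2 / ((2*ij.2+l).factorial :ℂ) * (a^2)^ij.2))
    + a^(l-1)*b * (∑ ij ∈ antidiagonal n, ((-1:ℂ)^ij.1 / ((2*ij.1+1).factorial :ℂ) * (b^2)^ij.1) *
        ((-1:ℂ)^ij.2 / ((2*ij.2+(l-1)).factorial :ℂ) * (a^2)^ij.2))
    + ∑ k ∈ Icc 2 l, (a^(l-k) * b^k / ((l-k).factorial :ℂ)) *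
        ((-1:ℂ)^n / ((2*n+k).factorial :ℂ) * (b^2)^n) := by
  set N := 2*n+l with hN
  have hpow : (a+b)^l * ((a+b)^2)^n = (a+b)^N := by
    rw [← pow_mul, ← pow_add, hN, add_comm l (2*n)]
  have hsum : ∑ m ∈ range (N+1), Tc a b N m = (a+b)^N / (N.factorial : ℂ) := by
    rw [eq_div_iff (hfacC N), sum_mul, add_comm a b, add_pow]
    refine sum_congr rfl fun m hm => ?_
    have hmN : m ≤ N := Nat.lt_succ_iff.mp (mem_range.mp hm)
    have h := Nat.choose_mul_factorial_mul_factorial hmN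
    have hc : (N.choose m : ℂ) * (m.factorial : ℂ) * ((N-m).factorial : ℂ)
        = (N.factorial : ℂ) := by exact_mod_cast congrArg (Nat.cast : ℕ → ℂ) h
    unfold Tc
    rw [div_mul_eq_mul_div, div_eq_iff (mul_ne_zero (hfacC _) (hfacC _))]
    linear_combination (-(a^(N-m) * b^m)) * hc
  have stepA : (a+b)^l * ((-1:ℂ)^n / (N.factorial :ℂ) * ((a+b)^2)^n)
      = (-1:ℂ)^n * ∑ m ∈ range (N+1), Tc a b N m := by
    rw [hsum, ← hpow]; ring
  have stepB : a^l * (∑ ij ∈ antidiagonal n, ((-1:ℂ)^ij.1 / ((2*ij.1+0).factorial :ℂ) * (b^2)^ij.1) *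
        ((-1:ℂ)^ij.2 / ((2*ij.2+l).factorial :ℂ) * (a^2)^ij.2))
      = (-1:ℂ)^n * ∑ i ∈ range (n+1), Tc a b N (2*i) := by
    rw [Finset.Nat.sum_antidiagonal_eq_sum_range_succ_mk, mul_sum, mul_sum]
    refine sum_congr rfl fun i hi => ?_
    have hin : i ≤ n := Nat.lt_succ_iff.mp (mem_range.mp hi)
    have h1 : N - 2*i = 2*(n-i)+l := by omega
    have h2 : (-1:ℂ)^n = (-1:ℂ)^i * (-1:ℂ)^(n-i) := by
      rw [← pow_add]; congr 1; omega
    have hb : (b^2)^i = b^(2*i) := (pow_mul b 2 i).symm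
    have ha : (a^2)^(n-i) = a^(2*(n-i)) := (pow_mul a 2 (n-i)).symm
    have ha2 : a^(2*(n-i)+l) = a^l * a^(2*(n-i)) := by
      rw [pow_add]; exact mul_comm _ _
    unfold Tc
    rw [h1, h2, hb, ha, Nat.add_zero, ha2]
    ring
  have stepC : a^(l-1)*b * (∑ ij ∈ antidiagonal n, ((-1:ℂ)^ij.1 / ((2*ij.1+1).factorial :ℂ) * (b^2)^ij.1) *
        ((-1:ℂ)^ij.2 / ((2*ij.2+(l-1)).factorial :ℂ) * (a^2)^ij.2))
      = (-1:ℂ)^n * ∑ i ∈ range (n+1), Tc a b N (2*i+1) := by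
    rw [Finset.Nat.sum_antidiagonal_eq_sum_range_succ_mk, mul_sum, mul_sum]
    refine sum_congr rfl fun i hi => ?_
    have hin : i ≤ n := Nat.lt_succ_iff.mp (mem_range.mp hi)
    have h1 : N - (2*i+1) = 2*(n-i)+(l-1) := by omega
    have h2 : (-1:ℂ)^n = (-1:ℂ)^i * (-1:ℂ)^(n-i) := by
      rw [← pow_add]; congr 1; omega
    have hb : (b^2)^i = b^(2*i) := (pow_mul b 2 i).symm
    have ha : (a^2)^(n-i) = a^(2*(n-i)) := (pow_mul a 2 (n-i)).symm
    have hbb : b^(2*i+1) = b * b^(2*i) := by rw [pow_succ]; exact mul_comm _ _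
    have haa : a^(2*(n-i)+(l-1)) = a^(l-1) * a^(2*(n-i)) := by
      rw [pow_add]; exact mul_comm _ _
    unfold Tc
    rw [h1, h2, hb, ha, hbb, haa]
    ring
  have stepD : (∑ k ∈ Icc 2 l, (a^(l-k) * b^k / ((l-k).factorial :ℂ)) *
        ((-1:ℂ)^n / ((2*n+k).factorial :ℂ) * (b^2)^n))
      = (-1:ℂ)^n * ∑ k ∈ Icc 2 l, Tc a b N (2*n+k) := by
    rw [mul_sum]
    refine sum_congr rfl fun k hk => ?_
    obtain ⟨hk2, hkl⟩ := mem_Icc.mp hk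
    have h1 : N - (2*n+k) = l-k := by omega
    have hb : (b^2)^n = b^(2*n) := (pow_mul b 2 n).symm
    have hbb : b^(2*n+k) = b^k * b^(2*n) := by rw [pow_add]; exact mul_comm _ _
    unfold Tc
    rw [h1, hb, hbb]
    ring
  have stepE : ∑ m ∈ range (N+1), Tc a b N m
      = ∑ i ∈ range (n+1), Tc a b N (2*i) + ∑ i ∈ range (n+1), Tc a b N (2*i+1)
        + ∑ k ∈ Icc 2 l, Tc a b N (2*n+k) := by
    have hle : 2*n+2 ≤ N+1 := by omega
    rw [range_eq_Ico, ← Finset.sum_Ico_consecutive _ (Nat.zero_le (2*n+2)) hle,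
      ← range_eq_Ico, show 2*n+2 = 2*(n+1) from by ring, sum_range_even_odd]
    congr 1
    rw [show Icc 2 l = Ico 2 (l+1) from by rw [Finset.Ico_add_one_right_eq_Icc],
      Finset.sum_Ico_eq_sum_range, Finset.sum_Ico_eq_sum_range,
      show 2*(n+1) = 2*n+2 from by ring, show N+1-(2*n+2) = l+1-2 from by omega]
    exact sum_congr rfl fun i _ => by rw [show 2*n+2+i = 2*n+(2+i) from by omega]
  rw [stepA, stepB, stepC, stepD, stepE]
  ring

/-- The oscillatory function `φ_l(A) = ∑_{k=0}^∞ (-1)^k A^k / (2k+l)!` on a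
complex Banach algebra. -/
noncomputable def osc {𝔸 : Type*} [NormedRing 𝔸] [NormedAlgebra ℂ 𝔸] [CompleteSpace 𝔸]
    (l : ℕ) (A : 𝔸) : 𝔸 :=
  ∑' k : ℕ, ((-1 : ℂ) ^ k / (Nat.factorial (2 * k + l) : ℂ)) • A ^ k

noncomputable def fcoef (l : ℕ) (x : ℂ) (k : ℕ) : ℂ :=
  (-1:ℂ)^k / ((2*k+l).factorial :ℂ) * x^k

section analytic
variable {𝔸 : Type*} [NormedRing 𝔸] [NormedAlgebra ℂ 𝔸] [CompleteSpace 𝔸]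

lemma summable_norm_osc (A : 𝔸) (l : ℕ) (x : ℂ) :
    Summable fun k => ‖(fcoef l x k) • A^k‖ := by
  have hb := (Real.summable_pow_div_factorial (‖x‖ * ‖A‖)).mul_left (max 1 ‖(1:𝔸)‖)
  refine hb.of_nonneg_of_le (fun k => norm_nonneg _) fun k => ?_
  rw [norm_smul]
  have hfle : (k.factorial : ℝ) ≤ ((2*k+l).factorial : ℝ) := by
    exact_mod_cast Nat.factorial_le (by omega)
  have hfpos : (0:ℝ) < (k.factorial : ℝ) := by positivity
  have h1 : ‖fcoef l x k‖ ≤ ‖x‖^k / (k.factorial : ℝ) := by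
    unfold fcoef
    rw [norm_mul, norm_div, norm_pow, norm_pow, norm_neg, norm_one, one_pow,
      Complex.norm_natCast, div_mul_eq_mul_div, one_mul]
    gcongr
  have h2 : ‖A^k‖ ≤ max 1 ‖(1:𝔸)‖ * ‖A‖^k := by
    cases k with
    | zero => simpa using le_max_right 1 ‖(1:𝔸)‖
    | succ m =>
      refine (norm_pow_le' A (Nat.succ_pos m)).trans ?_
      exact le_mul_of_one_le_left (by positivity) (le_max_left _ _)
  calc ‖fcoef l x k‖ * ‖A^k‖ ≤ (‖x‖^k / (k.factorial : ℝ)) * (max 1 ‖(1:𝔸)‖ * ‖A‖^k) :=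
        mul_le_mul h1 h2 (norm_nonneg _) (by positivity)
    _ = max 1 ‖(1:𝔸)‖ * ((‖x‖*‖A‖)^k / (k.factorial : ℝ)) := by rw [mul_pow]; ring

lemma summable_osc (A : 𝔸) (l : ℕ) (x : ℂ) :
    Summable fun k => (fcoef l x k) • A^k :=
  (summable_norm_osc A l x).of_norm

lemma osc_smul_eq (l : ℕ) (x : ℂ) (A : 𝔸) :
    osc l (x • A) = ∑' k, (fcoef l x k) • A^k := by
  unfold osc fcoef
  refine tsum_congr fun k => ?_
  rw [smul_pow, smul_smul, mul_comm]

lemma inner_eq (p q : ℕ) (x y : ℂ) (A : 𝔸) (n : ℕ) :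
    ∑ ij ∈ antidiagonal n, (fcoef p x ij.1 • A^ij.1) * (fcoef q y ij.2 • A^ij.2)
      = (∑ ij ∈ antidiagonal n, fcoef p x ij.1 * fcoef q y ij.2) • A^n := by
  rw [sum_smul]
  refine sum_congr rfl fun ij hij => ?_
  rw [smul_mul_assoc, mul_smul_comm, smul_smul, ← pow_add, Finset.HasAntidiagonal.mem_antidiagonal.mp hij]

lemma summable_prod (A : 𝔸) (p q : ℕ) (x y : ℂ) :
    Summable fun n => (∑ ij ∈ antidiagonal n, fcoef p x ij.1 * fcoef q y ij.2) • A^n := by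
  have h := (summable_norm_sum_mul_antidiagonal_of_summable_norm
    (summable_norm_osc A p x) (summable_norm_osc A q y)).of_norm
  exact h.congr fun n => inner_eq p q x y A n

lemma osc_mul (p q : ℕ) (x y : ℂ) (A : 𝔸) :
    osc p (x • A) * osc q (y • A) =
      ∑' n, (∑ ij ∈ antidiagonal n, fcoef p x ij.1 * fcoef q y ij.2) • A^n := by
  rw [osc_smul_eq, osc_smul_eq,
    tsum_mul_tsum_eq_tsum_sum_antidiagonal_of_summable_norm
      (summable_norm_osc A p x) (summable_norm_osc A q y)]
  exact tsum_congr fun n => inner_eq p q x y A n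

end analytic

/-- the addition formula for `(a+b)^l φ_l((a+b)² A)`. -/
theorem osc_addition_formula {𝔸 : Type*} [NormedRing 𝔸] [NormedAlgebra ℂ 𝔸]
    [CompleteSpace 𝔸] (A : 𝔸) (l : ℕ) (hl : 2 ≤ l) (a b : ℝ) :
    (((a : ℂ) + b) ^ l) • osc l ((((a : ℂ) + b) ^ 2) • A) =
      ((a : ℂ) ^ l) • (osc 0 (((b : ℂ) ^ 2) • A) * osc l (((a : ℂ) ^ 2) • A)) +
        ((a : ℂ) ^ (l - 1) * b) •
          (osc 1 (((b : ℂ) ^ 2) • A) * osc (l - 1) (((a : ℂ) ^ 2) • A)) +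
        ∑ k ∈ Finset.Icc 2 l,
          ((a : ℂ) ^ (l - k) * (b : ℂ) ^ k / (Nat.factorial (l - k) : ℂ)) •
            osc k (((b : ℂ) ^ 2) • A) := by
  have hL : (((a:ℂ) + b) ^ l) • osc l ((((a:ℂ) + b) ^ 2) • A)
      = ∑' n, (((a:ℂ)+b)^l * fcoef l (((a:ℂ)+b)^2) n) • A^n := by
    rw [osc_smul_eq, ← Summable.tsum_const_smul _ (summable_osc A l (((a:ℂ)+b)^2))]
    exact tsum_congr fun n => smul_smul _ _ _
  have hR1 : ((a:ℂ)^l) • (osc 0 (((b:ℂ)^2) • A) * osc l (((a:ℂ)^2) • A))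
      = ∑' n, ((a:ℂ)^l *
          ∑ ij ∈ antidiagonal n, fcoef 0 ((b:ℂ)^2) ij.1 * fcoef l ((a:ℂ)^2) ij.2) • A^n := by
    rw [osc_mul, ← Summable.tsum_const_smul _ (summable_prod A 0 l ((b:ℂ)^2) ((a:ℂ)^2))]
    exact tsum_congr fun n => smul_smul _ _ _
  have hR2 : ((a:ℂ)^(l-1) * b) • (osc 1 (((b:ℂ)^2) • A) * osc (l-1) (((a:ℂ)^2) • A))
      = ∑' n, ((a:ℂ)^(l-1) * (b:ℂ) *
          ∑ ij ∈ antidiagonal n, fcoef 1 ((b:ℂ)^2) ij.1 * fcoef (l-1) ((a:ℂ)^2) ij.2) • A^n := by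
    rw [osc_mul, ← Summable.tsum_const_smul _ (summable_prod A 1 (l-1) ((b:ℂ)^2) ((a:ℂ)^2))]
    exact tsum_congr fun n => smul_smul _ _ _
  have hR3 : (∑ k ∈ Icc 2 l, ((a:ℂ)^(l-k) * (b:ℂ)^k / ((l-k).factorial :ℂ)) •
        osc k (((b:ℂ)^2) • A))
      = ∑' n, ∑ k ∈ Icc 2 l,
          (((a:ℂ)^(l-k) * (b:ℂ)^k / ((l-k).factorial :ℂ)) * fcoef k ((b:ℂ)^2) n) • A^n := by
    have h1 : ∀ k ∈ Icc 2 l, ((a:ℂ)^(l-k) * (b:ℂ)^k / ((l-k).factorial :ℂ)) •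
          osc k (((b:ℂ)^2) • A)
        = ∑' n, (((a:ℂ)^(l-k) * (b:ℂ)^k / ((l-k).factorial :ℂ)) * fcoef k ((b:ℂ)^2) n) • A^n := by
      intro k hk
      rw [osc_smul_eq, ← Summable.tsum_const_smul _ (summable_osc A k ((b:ℂ)^2))]
      exact tsum_congr fun n => smul_smul _ _ _
    rw [Finset.sum_congr rfl h1]
    exact (Summable.tsum_finsetSum fun k hk => ((summable_osc A k ((b:ℂ)^2)).const_smul _).congr
      fun n => smul_smul _ _ _).symm
  rw [hL, hR1, hR2, hR3]
  have hs1 : Summable fun n => ((a:ℂ)^l *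
      ∑ ij ∈ antidiagonal n, fcoef 0 ((b:ℂ)^2) ij.1 * fcoef l ((a:ℂ)^2) ij.2) • A^n :=
    ((summable_prod A 0 l ((b:ℂ)^2) ((a:ℂ)^2)).const_smul _).congr fun n => smul_smul _ _ _
  have hs2 : Summable fun n => ((a:ℂ)^(l-1) * (b:ℂ) *
      ∑ ij ∈ antidiagonal n, fcoef 1 ((b:ℂ)^2) ij.1 * fcoef (l-1) ((a:ℂ)^2) ij.2) • A^n :=
    ((summable_prod A 1 (l-1) ((b:ℂ)^2) ((a:ℂ)^2)).const_smul _).congr fun n => smul_smul _ _ _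
  have hs3 : Summable fun n => ∑ k ∈ Icc 2 l,
      (((a:ℂ)^(l-k) * (b:ℂ)^k / ((l-k).factorial :ℂ)) * fcoef k ((b:ℂ)^2) n) • A^n :=
    summable_sum fun k hk => ((summable_osc A k ((b:ℂ)^2)).const_smul _).congr
      fun n => smul_smul _ _ _
  rw [← Summable.tsum_add hs1 hs2, ← Summable.tsum_add (hs1.add hs2) hs3]
  refine tsum_congr fun n => ?_
  rw [← sum_smul, ← add_smul, ← add_smul]
  refine congrArg (· • A^n) ?_
  simp only [fcoef]
  exact coeffId (a:ℂ) (b:ℂ) l n hl
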